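/- Let d ≥ 2, ω = exp(2πi/d), Z the generalized Pauli-Z on ℂ^d, |J⟩ the uniform superposition, and A₀ = ω^{−1/4} Z(I − (1−i)|J⟩⟨J|). Then A₀ is unitary, A₀^d = I, and for every 1 ≤ k ≤ d, A₀^k = ω^{−k/4} Z^k (I − (1−i)∑_{ℓ=0}^{k−1} Z^{−ℓ}|J⟩⟨J|Z^{ℓ}). -/

import Mathlib

open Complex Matrix

/-- `A₀ = ω^{−1/4} Z(I − (1−i)|J⟩⟨J|)` is unitary, `A₀^d = I`, and for `1 ≤ k ≤ d`,
`A₀^k = ω^{−k/4} Z^k (I − (1−i)∑_{ℓ<k} Z^{−ℓ}|J⟩⟨J|Z^{ℓ})`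
(with `Z^{-ℓ}` written `(star Z)^ℓ` since `Z` is unitary). -/
theorem A0_powers (d : ℕ) (hd : 2 ≤ d)
    (ω : ℂ) (hω : ω = Complex.exp (2 * Real.pi * I / d))
    (ωq : ℂ) (hωq : ωq = Complex.exp (-(Real.pi * I) / (2 * d)))
    (Z : Matrix (Fin d) (Fin d) ℂ)
    (hZ : Z = Matrix.diagonal fun i : Fin d => ω ^ (i : ℕ))
    (J : Fin d → ℂ) (hJ : J = fun _ => (1 : ℂ) / Real.sqrt d)
    (Jproj : Matrix (Fin d) (Fin d) ℂ)
    (hJproj : Jproj = Matrix.vecMulVec J fun i => (starRingEnd ℂ) (J i))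
    (A₀ : Matrix (Fin d) (Fin d) ℂ)
    (hA₀ : A₀ = ωq • (Z * (1 - (1 - I) • Jproj))) :
    (A₀ * star A₀ = 1 ∧ star A₀ * A₀ = 1) ∧
    A₀ ^ d = 1 ∧
    (∀ k : ℕ, 1 ≤ k → k ≤ d →
      A₀ ^ k = ωq ^ k •
        (Z ^ k * (1 - (1 - I) • ∑ ℓ ∈ Finset.range k, (star Z) ^ ℓ * Jproj * Z ^ ℓ))) := by
  -- basic scalar facts
  have hd0 : (d:ℂ) ≠ 0 := Nat.cast_ne_zero.mpr (by omega)
  have hdn : d ≠ 0 := by omega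
  have hprim : IsPrimitiveRoot ω d := hω ▸ Complex.isPrimitiveRoot_exp d hdn
  have hωd : ω ^ d = 1 := hprim.pow_eq_one
  have hcω : (starRingEnd ℂ) ω * ω = 1 := by
    rw [hω, ← Complex.exp_conj, ← Complex.exp_add]
    rw [show (starRingEnd ℂ) (2 * (Real.pi:ℂ) * I / d) + 2 * Real.pi * I / d = 0 by
      simp [map_div₀, map_ofNat, Complex.conj_I]; ring]
    exact Complex.exp_zero
  have hωqc : ωq * (starRingEnd ℂ) ωq = 1 := by
    rw [hωq, ← Complex.exp_conj, ← Complex.exp_add]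
    rw [show -((Real.pi:ℂ) * I) / (2*d) + (starRingEnd ℂ) (-((Real.pi:ℂ) * I) / (2*d)) = 0 by
      simp [map_div₀, map_ofNat, Complex.conj_I]; ring]
    exact Complex.exp_zero
  have hωqd : ωq ^ d = -I := by
    rw [hωq, ← Complex.exp_nat_mul]
    rw [show (d:ℂ) * (-((Real.pi:ℂ) * I) / (2*d)) = ((-(Real.pi/2) : ℝ) : ℂ) * I by
      push_cast; field_simp]
    rw [Complex.exp_mul_I]
    simp [← Complex.ofReal_cos, ← Complex.ofReal_sin,
      Real.cos_pi_div_two, Real.sin_pi_div_two]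
  have hPapp : ∀ i j, Jproj i j = 1/(d:ℂ) := by
    intro i j
    rw [hJproj, Matrix.vecMulVec_apply, hJ]
    have h0 : ((Real.sqrt d : ℝ) : ℂ) * ((Real.sqrt d : ℝ) : ℂ) = (d:ℂ) := by
      rw [← Complex.ofReal_mul, Real.mul_self_sqrt (by positivity)]; simp
    simp only [one_div, map_inv₀, Complex.conj_ofReal]
    rw [← mul_inv, h0]
  -- matrix facts
  have hone : ∀ a : ℕ, (starRingEnd ℂ) (ω ^ a) * ω ^ a = 1 := fun a => by
    rw [map_pow, ← mul_pow, hcω, one_pow]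
  have hZs : star Z = Matrix.diagonal fun i : Fin d => (starRingEnd ℂ) (ω ^ (i:ℕ)) := by
    rw [hZ, Matrix.star_eq_conjTranspose, Matrix.diagonal_conjTranspose]
    rfl
  have hZZs : Z * star Z = 1 := by
    rw [hZs, hZ, Matrix.diagonal_mul_diagonal,
      show (fun i : Fin d => ω ^ (i:ℕ) * (starRingEnd ℂ) (ω ^ (i:ℕ))) = fun _ => (1:ℂ) from
        funext fun i => by rw [mul_comm]; exact hone _, Matrix.diagonal_one]
  have hZsZ : star Z * Z = 1 := by
    rw [hZs, hZ, Matrix.diagonal_mul_diagonal,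
      show (fun i : Fin d => (starRingEnd ℂ) (ω ^ (i:ℕ)) * ω ^ (i:ℕ)) = fun _ => (1:ℂ) from
        funext fun i => hone _, Matrix.diagonal_one]
  have hZp : ∀ m : ℕ, Z ^ m = Matrix.diagonal fun i : Fin d => (ω ^ (i:ℕ)) ^ m := by
    intro m; rw [hZ, Matrix.diagonal_pow]; rfl
  have hZsp : ∀ m : ℕ, (star Z) ^ m =
      Matrix.diagonal fun i : Fin d => ((starRingEnd ℂ) (ω ^ (i:ℕ))) ^ m := by
    intro m; rw [hZs, Matrix.diagonal_pow]; rfl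
  have hgeom : ∀ x : ℂ, x ≠ 1 → x ^ d = 1 → ∑ j : Fin d, x ^ (j:ℕ) = 0 := by
    intro x hx hxd
    rw [Fin.sum_univ_eq_sum_range (fun j => x ^ j) d, geom_sum_eq hx, hxd, sub_self, zero_div]
  have hPZP : ∀ m : ℕ, 0 < m → m < d → Jproj * Z ^ m * Jproj = 0 := by
    intro m hm hmd
    ext a b
    rw [Matrix.mul_apply]
    simp only [hZp, Matrix.mul_diagonal, hPapp, Matrix.zero_apply]
    have h1 : ∀ j : Fin d, 1/(d:ℂ) * (ω ^ (j:ℕ)) ^ m * (1/(d:ℂ))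
        = (1/(d:ℂ) * (1/(d:ℂ))) * (ω ^ m) ^ (j:ℕ) := by
      intro j; rw [← pow_mul, ← pow_mul, mul_comm (j:ℕ) m]; ring
    rw [Finset.sum_congr rfl fun j _ => h1 j, ← Finset.mul_sum,
      hgeom _ (hprim.pow_ne_one_of_pos_of_lt hm.ne' hmd)
        (by rw [← pow_mul, mul_comm, pow_mul, hωd, one_pow]), mul_zero]
  have hSd : ∑ ℓ ∈ Finset.range d, (star Z) ^ ℓ * Jproj * Z ^ ℓ = 1 := by
    ext a b
    rw [Matrix.sum_apply]
    have hterm : ∀ ℓ : ℕ, ((star Z) ^ ℓ * Jproj * Z ^ ℓ) a b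
        = 1/(d:ℂ) * ((starRingEnd ℂ) (ω ^ (a:ℕ)) * ω ^ (b:ℕ)) ^ ℓ := by
      intro ℓ
      rw [hZp, hZsp, Matrix.mul_diagonal, Matrix.diagonal_mul, hPapp, mul_pow]
      ring
    rw [Finset.sum_congr rfl fun ℓ _ => hterm ℓ, ← Finset.mul_sum]
    by_cases hab : a = b
    · subst hab
      rw [hone]
      simp only [one_pow, Finset.sum_const, Finset.card_range, nsmul_eq_mul, mul_one,
        Matrix.one_apply_eq]
      field_simp
    · have hx1 : (starRingEnd ℂ) (ω ^ (a:ℕ)) * ω ^ (b:ℕ) ≠ 1 := by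
        intro h
        have : ω ^ (a:ℕ) = ω ^ (b:ℕ) := by
          calc ω ^ (a:ℕ) = ω ^ (a:ℕ) * ((starRingEnd ℂ) (ω ^ (a:ℕ)) * ω ^ (b:ℕ)) := by
                rw [h, mul_one]
            _ = ((starRingEnd ℂ) (ω ^ (a:ℕ)) * ω ^ (a:ℕ)) * ω ^ (b:ℕ) := by ring
            _ = ω ^ (b:ℕ) := by rw [hone, one_mul]
        exact hab (Fin.ext (hprim.pow_inj a.isLt b.isLt this))
      have hxd : ((starRingEnd ℂ) (ω ^ (a:ℕ)) * ω ^ (b:ℕ)) ^ d = 1 := by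
        rw [mul_pow, ← map_pow, ← pow_mul, ← pow_mul, mul_comm (a:ℕ) d, mul_comm (b:ℕ) d,
          pow_mul, pow_mul, hωd, one_pow, one_pow, _root_.map_one, one_mul]
      rw [geom_sum_eq hx1, hxd, sub_self, zero_div, mul_zero]
      exact (Matrix.one_apply_ne hab).symm
  -- projection facts
  have hP2 : Jproj * Jproj = Jproj := by
    ext a b
    rw [Matrix.mul_apply]
    simp only [hPapp, Finset.sum_const, Finset.card_range, nsmul_eq_mul, Finset.card_univ,
      Fintype.card_fin]
    field_simp
  have hPst : star Jproj = Jproj := by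
    ext a b
    rw [Matrix.star_apply, hPapp, hPapp]
    simp [map_div₀]
  have hprod : ∀ a b : ℂ, (1 - a•Jproj) * (1 - b•Jproj) = 1 - (a + b - a*b)•Jproj := by
    intro a b
    simp only [mul_sub, sub_mul, mul_one, one_mul, Matrix.smul_mul, Matrix.mul_smul,
      smul_smul, hP2]
    module
  have hcc : (1 - I) + (1 + I) - (1 - I)*(1 + I) = 0 := by
    have : I * I = -1 := Complex.I_mul_I
    ring_nf
    rw [Complex.I_sq]
    ring
  have hstarA : star A₀ = (starRingEnd ℂ) ωq • ((1 - (1 + I) • Jproj) * star Z) := by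
    rw [hA₀, star_smul, StarMul.star_mul, star_sub, star_one, star_smul, hPst,
      show (star (1 - I) : ℂ) = 1 + I by simp [Complex.star_def, map_sub, Complex.conj_I]]
    rfl
  have hU1 : A₀ * star A₀ = 1 := by
    rw [hstarA, hA₀, Matrix.smul_mul, Matrix.mul_smul, smul_smul, hωqc, one_smul]
    calc Z * (1 - (1-I)•Jproj) * ((1 - (1+I)•Jproj) * star Z)
        = Z * ((1 - (1-I)•Jproj) * (1 - (1+I)•Jproj)) * star Z := by
          rw [mul_assoc, mul_assoc, mul_assoc]
      _ = Z * star Z := by rw [hprod, hcc, zero_smul, sub_zero, mul_one]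
      _ = 1 := hZZs
  have hU2 : star A₀ * A₀ = 1 := by
    rw [hstarA, hA₀, Matrix.smul_mul, Matrix.mul_smul, smul_smul, mul_comm, hωqc, one_smul]
    calc (1 - (1+I)•Jproj) * star Z * (Z * (1 - (1-I)•Jproj))
        = (1 - (1+I)•Jproj) * (star Z * Z) * (1 - (1-I)•Jproj) := by
          rw [mul_assoc, mul_assoc, mul_assoc]
      _ = (1 - (1+I)•Jproj) * (1 - (1-I)•Jproj) := by rw [hZsZ, mul_one]
      _ = 1 := by rw [hprod, show (1+I) + (1-I) - (1+I)*(1-I) = 0 by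
            ring_nf; rw [Complex.I_sq]; ring, zero_smul, sub_zero]
  -- main induction
  have hZpows : ∀ ℓ : ℕ, Z * (star Z) ^ (ℓ+1) = (star Z) ^ ℓ := by
    intro ℓ
    rw [pow_succ', ← mul_assoc, hZZs, one_mul]
  have key : ∀ k : ℕ, k ≤ d →
      A₀ ^ k = ωq ^ k •
        (Z ^ k * (1 - (1 - I) • ∑ ℓ ∈ Finset.range k, (star Z) ^ ℓ * Jproj * Z ^ ℓ)) := by
    intro k
    induction k with
    | zero => intro _; simp
    | succ k ih =>
      intro hk1
      have hkd : k < d := hk1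
      set S : Matrix (Fin d) (Fin d) ℂ := ∑ ℓ ∈ Finset.range k, (star Z) ^ ℓ * Jproj * Z ^ ℓ
      set T : Matrix (Fin d) (Fin d) ℂ :=
        ∑ ℓ ∈ Finset.range k, (star Z) ^ (ℓ+1) * Jproj * Z ^ (ℓ+1)
      have hSZ : S * Z = Z * T := by
        rw [Finset.sum_mul, Finset.mul_sum]
        refine Finset.sum_congr rfl fun ℓ _ => ?_
        rw [← mul_assoc, ← mul_assoc, hZpows, mul_assoc, mul_assoc, ← pow_succ]
        rw [← mul_assoc]
      have hTP : T * Jproj = 0 := by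
        rw [Finset.sum_mul]
        refine Finset.sum_eq_zero fun ℓ hℓ => ?_
        have hℓk : ℓ < k := Finset.mem_range.mp hℓ
        rw [mul_assoc ((star Z)^(ℓ+1)), mul_assoc ((star Z)^(ℓ+1)),
          hPZP (ℓ+1) (Nat.succ_pos ℓ) (by omega), mul_zero]
      have hTS : Jproj + T = ∑ ℓ ∈ Finset.range (k+1), (star Z) ^ ℓ * Jproj * Z ^ ℓ := by
        rw [Finset.sum_range_succ' (fun ℓ => (star Z) ^ ℓ * Jproj * Z ^ ℓ) k]
        simp [add_comm]; rfl
      have hUZ : (1 - (1-I) • S) * Z = Z * (1 - (1-I) • T) := by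
        rw [sub_mul, one_mul, mul_sub, mul_one, Matrix.smul_mul, Matrix.mul_smul, hSZ]
      have hprod2 : (1 - (1-I) • T) * (1 - (1-I) • Jproj) = 1 - (1-I) • (Jproj + T) := by
        simp only [mul_sub, sub_mul, one_mul, mul_one, Matrix.smul_mul, Matrix.mul_smul,
          smul_smul, hTP, smul_zero, sub_zero, smul_add]
        abel
      rw [pow_succ, ih (le_of_lt hkd), hA₀, Matrix.smul_mul, Matrix.mul_smul, smul_smul,
        ← pow_succ]
      congr 1
      calc Z ^ k * (1 - (1-I) • S) * (Z * (1 - (1-I) • Jproj))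
          = Z ^ k * (((1 - (1-I) • S) * Z) * (1 - (1-I) • Jproj)) := by
            rw [mul_assoc, ← mul_assoc (1 - (1-I) • S)]
        _ = Z ^ k * ((Z * (1 - (1-I) • T)) * (1 - (1-I) • Jproj)) := by rw [hUZ]
        _ = Z ^ (k+1) * ((1 - (1-I) • T) * (1 - (1-I) • Jproj)) := by
            rw [← mul_assoc, ← mul_assoc, ← pow_succ, mul_assoc]
        _ = Z ^ (k+1) * (1 - (1-I) • (Jproj + T)) := by rw [hprod2]
        _ = Z ^ (k+1) * (1 - (1-I) • ∑ ℓ ∈ Finset.range (k+1), (star Z) ^ ℓ * Jproj * Z ^ ℓ) := by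
            rw [hTS]
  have hZd : Z ^ d = 1 := by
    rw [hZp d, show (fun i : Fin d => (ω ^ (i:ℕ)) ^ d) = fun _ => (1:ℂ) from
      funext fun i => by rw [← pow_mul, mul_comm, pow_mul, hωd, one_pow], Matrix.diagonal_one]
  have hAd : A₀ ^ d = 1 := by
    rw [key d le_rfl, hSd, hZd, hωqd, one_mul]
    ext i j
    simp only [Matrix.smul_apply, Matrix.sub_apply, Matrix.one_apply, smul_eq_mul]
    by_cases h : i = j <;> simp [h, Complex.I_mul_I]
  exact ⟨⟨hU1, hU2⟩, hAd, fun k _ hk => key k hk⟩
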